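/- Let (H, ⟨·,·⟩) be an inner product space over 𝕂 (𝕂 = ℝ or ℂ) and e ∈ H with ‖e‖ = 1. For α, β ∈ 𝕂 and x ∈ H, the condition Re⟨αe − x, x − βe⟩ ≥ 0 holds if and only if ‖x − ((α + β)/2)e‖ ≤ (1/2)|α − β|. -/

import Mathlib

open RCLike

theorem gruss_key {𝕜 H : Type*} [RCLike 𝕜] [NormedAddCommGroup H]
    [InnerProductSpace 𝕜 H] (e : H) (he : ‖e‖ = 1) (α β : 𝕜) (x : H) :
    RCLike.re (inner (𝕜 := 𝕜) (α • e - x) (x - β • e)) =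
      (2⁻¹ * ‖α - β‖)^2 - ‖x - ((α + β) / 2) • e‖^2 := by
  have he2 : (inner (𝕜 := 𝕜) e e : 𝕜) = 1 := by
    rw [inner_self_eq_norm_sq_to_K, he]; simp
  have h1 : ‖x - ((α + β) / 2) • e‖^2 = re (inner (𝕜 := 𝕜) (x - ((α + β) / 2) • e) (x - ((α + β) / 2) • e)) := by
    rw [← @norm_sq_eq_re_inner 𝕜]
  have h2 : ‖α - β‖^2 = re ((α - β) * (starRingEnd 𝕜) (α - β)) := by
    rw [RCLike.mul_conj]; norm_cast
  have h3 : (2⁻¹ * ‖α - β‖) ^ 2 = 4⁻¹ * re ((α - β) * (starRingEnd 𝕜) (α - β)) := by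
    rw [← h2]; ring
  have hn : RCLike.normSq (2 : 𝕜) = 4 := by
    rw [RCLike.normSq_eq_def']; norm_num
  rw [h1, h3]
  simp only [inner_sub_left, inner_sub_right, inner_smul_left, inner_smul_right, he2, mul_one,
    ← inner_conj_symm x e,
    hn, map_sub, map_add, map_mul, RCLike.conj_re, RCLike.conj_im, RCLike.mul_re, div_eq_mul_inv,
    RCLike.inv_re, RCLike.inv_im, RCLike.one_re, RCLike.one_im, RCLike.mul_im,
    map_one, map_ofNat, map_div₀, RCLike.ofNat_re, RCLike.ofNat_im, RCLike.div_re, RCLike.div_im]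
  ring

/-- Equivalence of the two "ball" conditions in inner product spaces. -/
theorem gruss_condition_equiv {𝕜 H : Type*} [RCLike 𝕜] [NormedAddCommGroup H]
    [InnerProductSpace 𝕜 H] (e : H) (he : ‖e‖ = 1) (α β : 𝕜) (x : H) :
    0 ≤ RCLike.re (inner (𝕜 := 𝕜) (α • e - x) (x - β • e)) ↔
      ‖x - ((α + β) / 2) • e‖ ≤ 2⁻¹ * ‖α - β‖ := by
  rw [gruss_key e he α β x, sub_nonneg]
  exact pow_le_pow_iff_left₀ (norm_nonneg _) (by positivity) two_ne_zero
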